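/- Let Λ be the cocharacter lattice of a split reductive group with Weyl group W, and let Λ_Q^+ be the (rational) positive Weyl chamber. If x lies in a W-invariant convex subset S of Λ_Q that contains the orbit Wx, then the orthogonal projection of x onto any face of the positive Weyl chamber also lies in S. In particular, for any fan Σ supported in Λ_Q^+ whose W-orbit WΣ has convex support, the projection of any element of |Σ| onto any face of the positive Weyl chamber is contained in |WΣ| ∩ Λ_Q^+. -/

import Mathlib

/-!
STATEMENT 0: Let Λ be the cocharacter lattice of a split reductive group with Weyl
group W, and Λ_ℚ⁺ the positive Weyl chamber.  We model Λ ⊗ ℚ (equivalently, after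
extension of scalars, a real vector space with a W-invariant inner product) as a
finite-dimensional real inner product space `V`, the simple roots as a family
`α : ι → V` of nonzero vectors, and `W` as the reflection group generated by the
reflections in the hyperplanes `(span {α i})ᗮ`.  A face of the positive Weyl chamber
`{v | ∀ i, ⟪α i, v⟫ ≥ 0}` corresponding to a subset `I` of the simple roots spans the
subspace `(span (α '' I))ᗮ`, and the orthogonal projection onto that face is the
orthogonal projection onto this subspace.

The statement: if `x` lies in a `W`-invariant convex subset `S` containing the orbit
`W x` (which is automatic from invariance), then the orthogonal projection of `x`
onto any face of the positive Weyl chamber also lies in `S`.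
-/

open scoped RealInnerProductSpace

open Set Filter

private lemma aux_sum_pad {β : Type*} [AddCommMonoid β] {c n : ℕ} (h : c ≤ n) (f : Fin c → β) :
    (∑ i : Fin n, if h' : (i : ℕ) < c then f ⟨i, h'⟩ else 0) = ∑ j : Fin c, f j := by
  have e1 : (∑ i : Fin n, if h' : (i : ℕ) < c then f ⟨i, h'⟩ else 0)
      = ∑ i ∈ Finset.range n, (if h' : i < c then f ⟨i, h'⟩ else 0) :=
    Fin.sum_univ_eq_sum_range (fun i => if h' : i < c then f ⟨i, h'⟩ else 0) n
  have e2 : (∑ j : Fin c, f j)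
      = ∑ i ∈ Finset.range c, (if h' : i < c then f ⟨i, h'⟩ else 0) := by
    rw [← Fin.sum_univ_eq_sum_range (fun i => if h' : i < c then f ⟨i, h'⟩ else 0) c]
    refine Finset.sum_congr rfl fun i _ => ?_
    rw [dif_pos i.2]
  have e3 : (∑ i ∈ Finset.range c, (if h' : i < c then f ⟨i, h'⟩ else 0))
      + ∑ i ∈ Finset.Ico c n, (if h' : i < c then f ⟨i, h'⟩ else 0)
      = ∑ i ∈ Finset.range n, (if h' : i < c then f ⟨i, h'⟩ else 0) :=
    Finset.sum_range_add_sum_Ico _ h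
  have e4 : (∑ i ∈ Finset.Ico c n, (if h' : i < c then f ⟨i, h'⟩ else 0)) = 0 := by
    refine Finset.sum_eq_zero fun i hi => ?_
    rw [Finset.mem_Ico] at hi
    rw [dif_neg (by omega)]
  rw [e1, e2, ← e3, e4, add_zero]

private lemma aux_isCompact_convexHull {V : Type*} [NormedAddCommGroup V] [NormedSpace ℝ V]
    [FiniteDimensional ℝ V] {s : Set V} (hs : IsCompact s) :
    IsCompact (convexHull ℝ s) := by
  rcases s.eq_empty_or_nonempty with rfl | ⟨x₀, hx₀⟩
  · simp
  set n := Module.finrank ℝ V + 1 with hn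
  set Φ : (Fin n → ℝ) × (Fin n → V) → V := fun q => ∑ i, q.1 i • q.2 i with hΦ
  have hcont : Continuous Φ := by
    refine continuous_finset_sum _ fun i _ => ?_
    exact ((continuous_apply i).comp continuous_fst).smul ((continuous_apply i).comp continuous_snd)
  have hA : IsCompact (stdSimplex ℝ (Fin n) ×ˢ Set.pi Set.univ fun _ : Fin n => s) :=
    (isCompact_stdSimplex _ _).prod (isCompact_univ_pi fun _ => hs)
  have himage : Φ '' (stdSimplex ℝ (Fin n) ×ˢ Set.pi Set.univ fun _ : Fin n => s)
      = convexHull ℝ s := by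
    apply Subset.antisymm
    · rintro - ⟨⟨w, z⟩, ⟨⟨hw0, hw1⟩, hz⟩, rfl⟩
      exact (convex_convexHull ℝ s).sum_mem (fun i _ => hw0 i) hw1
        (fun i _ => subset_convexHull ℝ s (hz i (mem_univ i)))
    · intro x hx
      rw [convexHull_eq_union] at hx
      simp only [mem_iUnion] at hx
      obtain ⟨t, hts, hai, hxt⟩ := hx
      have hc : t.card ≤ n := by
        have h1 := hai.card_le_finrank_succ
        rw [Fintype.card_coe] at h1
        have h2 := Submodule.finrank_le (vectorSpan ℝ (Set.range ((↑) : t → V)))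
        omega
      rw [Finset.convexHull_eq] at hxt
      obtain ⟨w, hw0, hw1, hwx⟩ := hxt
      rw [Finset.centerMass_eq_of_sum_1 _ _ hw1] at hwx
      set e : Fin t.card ≃ {y // y ∈ t} := t.equivFin.symm with he
      set W : Fin n → ℝ := fun i => if h' : (i : ℕ) < t.card then w ↑(e ⟨i, h'⟩) else 0 with hW
      set Z : Fin n → V := fun i => if h' : (i : ℕ) < t.card then ↑(e ⟨i, h'⟩) else x₀ with hZ
      refine ⟨(W, Z), ⟨⟨fun i => ?_, ?_⟩, fun i _ => ?_⟩, ?_⟩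
      · rw [hW]; dsimp only
        split
        · exact hw0 _ (e _).2
        · exact le_refl 0
      · rw [hW]
        rw [aux_sum_pad hc (fun j => w ↑(e j))]
        rw [Equiv.sum_comp e (fun y => w ↑y), Finset.sum_coe_sort t w]
        exact hw1
      · rw [hZ]; dsimp only
        split
        · exact hts (e _).2
        · exact hx₀
      · rw [hΦ]; dsimp only
        have : ∀ i : Fin n, W i • Z i
            = (if h' : (i : ℕ) < t.card then w ↑(e ⟨i, h'⟩) • (↑(e ⟨i, h'⟩) : V) else 0) := by
          intro i
          rw [hW, hZ]; dsimp only
          split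
          · rfl
          · rw [zero_smul]
        rw [Finset.sum_congr rfl fun i _ => this i]
        rw [aux_sum_pad hc (fun j => w ↑(e j) • (↑(e j) : V))]
        rw [Equiv.sum_comp e (fun y : {y // y ∈ t} => w ↑y • (↑y : V)),
          Finset.sum_coe_sort t (fun y => w y • y)]
        exact hwx
  rw [← himage]; exact hA.image hcont

private lemma aux_closure_convexHull {V : Type*} [NormedAddCommGroup V] [NormedSpace ℝ V]
    [FiniteDimensional ℝ V] {O : Set V} (hO : Bornology.IsBounded O) :
    closure (convexHull ℝ O) = convexHull ℝ (closure O) := by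
  have h1 : IsCompact (closure O) :=
    Metric.isCompact_of_isClosed_isBounded isClosed_closure hO.closure
  have h2 : IsClosed (convexHull ℝ (closure O)) := (aux_isCompact_convexHull h1).isClosed
  refine Subset.antisymm (closure_minimal (convexHull_mono subset_closure) h2) ?_
  exact convexHull_min (closure_mono (subset_convexHull ℝ O)) (convex_convexHull ℝ O).closure

private lemma aux_mem_of_forall_support {V : Type*} [NormedAddCommGroup V]
    [InnerProductSpace ℝ V] [FiniteDimensional ℝ V] {D : Set V} (hD : Convex ℝ D)
    (h0 : (0 : V) ∈ closure D)
    (H : ∀ c : V, (∀ d ∈ D, (0:ℝ) ≤ ⟪c, d⟫) → ∀ d ∈ D, ⟪c, d⟫ = (0:ℝ)) :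
    (0 : V) ∈ D := by
  set M : Submodule ℝ V := Submodule.span ℝ D with hM
  have hDM : D ⊆ (M : Set V) := Submodule.subset_span
  set D2 : Set M := (Subtype.val) ⁻¹' D with hD2
  have hD2conv : Convex ℝ D2 := by
    have := hD.linear_preimage (M.subtype)
    exact this
  have h0M : (0 : M) ∈ closure D2 := by
    rw [Metric.mem_closure_iff] at h0 ⊢
    intro ε hε
    obtain ⟨d, hd, hdist⟩ := h0 ε hε
    exact ⟨⟨d, hDM hd⟩, hd, by rwa [Subtype.dist_eq]⟩
  have hspan : Submodule.span ℝ D2 = ⊤ := by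
    rw [Submodule.eq_top_iff']
    intro m
    have hm : (m : V) ∈ Submodule.span ℝ D := m.2
    have key : ∀ (v : V) (hv : v ∈ Submodule.span ℝ D),
        (⟨v, hv⟩ : M) ∈ Submodule.span ℝ D2 := by
      intro v hv
      induction hv using Submodule.span_induction with
      | mem v hvD => exact Submodule.subset_span (by exact hvD)
      | zero => exact Submodule.zero_mem _
      | add a b ha hb iha ihb =>
          have : (⟨a + b, Submodule.add_mem _ ha hb⟩ : M)
              = (⟨a, ha⟩ : M) + (⟨b, hb⟩ : M) := rfl
          rw [this]; exact Submodule.add_mem _ iha ihb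
      | smul r a ha iha =>
          have : (⟨r • a, Submodule.smul_mem _ r ha⟩ : M) = r • (⟨a, ha⟩ : M) := rfl
          rw [this]; exact Submodule.smul_mem _ r iha
    have := key (m : V) hm
    convert this using 2
  have haff : affineSpan ℝ D2 = ⊤ := by
    have hclosed : IsClosed ((affineSpan ℝ D2 : AffineSubspace ℝ M) : Set M) :=
      (affineSpan ℝ D2).closed_of_finiteDimensional
    have h0aff : (0 : M) ∈ affineSpan ℝ D2 :=
      closure_minimal (subset_affineSpan ℝ D2) hclosed h0M
    have hdir : (affineSpan ℝ D2).direction = ⊤ := by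
      rw [eq_top_iff, ← hspan]
      rw [Submodule.span_le]
      intro d hd
      have := AffineSubspace.vsub_mem_direction (subset_affineSpan ℝ D2 hd) h0aff
      simpa using this
    ext m
    simp only [AffineSubspace.mem_top, iff_true]
    have := AffineSubspace.vadd_mem_of_mem_direction
      (show m ∈ (affineSpan ℝ D2).direction by rw [hdir]; trivial) h0aff
    simpa using this
  have hint : (interior D2).Nonempty :=
    (hD2conv.interior_nonempty_iff_affineSpan_eq_top).mpr haff
  by_cases h00 : (0 : M) ∈ interior D2
  · have h7 : (0 : M) ∈ D2 := interior_subset h00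
    simpa [hD2] using h7
  obtain ⟨f, hf⟩ := geometric_hahn_banach_open_point hD2conv.interior isOpen_interior h00
  obtain ⟨y, hy⟩ := hint
  have hfD : ∀ d ∈ D2, f d ≤ 0 := by
    intro d hd
    have h1 : Tendsto (fun nn : ℕ => 1/((nn:ℝ)+1)) atTop (nhds 0) :=
      tendsto_one_div_add_atTop_nhds_zero_nat
    have hseq : Tendsto (fun nn : ℕ => (1 - 1/((nn:ℝ)+1)) * f d + (1/((nn:ℝ)+1)) * f y)
        atTop (nhds (f d)) := by
      have h2 := (((tendsto_const_nhds (x := (1:ℝ))).sub h1).mul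
        (tendsto_const_nhds (x := f d))).add (h1.mul (tendsto_const_nhds (x := f y)))
      simpa using h2
    refine le_of_tendsto hseq (Eventually.of_forall fun nn => ?_)
    have hb : (0:ℝ) < 1/((nn:ℝ)+1) := by positivity
    have hble : 1/((nn:ℝ)+1) ≤ 1 := by
      rw [div_le_one (by positivity)]
      have : (0:ℝ) ≤ (nn:ℝ) := Nat.cast_nonneg nn
      linarith
    have ha : (0:ℝ) ≤ 1 - 1/((nn:ℝ)+1) := by linarith
    have hmem := hD2conv.combo_closure_interior_mem_interior (subset_closure hd) hy ha hb
      (by ring)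
    have hlt := hf _ hmem
    rw [map_zero] at hlt
    have : f ((1 - 1/((nn:ℝ)+1)) • d + (1/((nn:ℝ)+1)) • y)
        = (1 - 1/((nn:ℝ)+1)) * f d + (1/((nn:ℝ)+1)) * f y := by
      rw [map_add, map_smul, map_smul]; rfl
    rw [this] at hlt
    exact hlt.le
  set c : V := -(((InnerProductSpace.toDual ℝ M).symm f : M) : V) with hc
  have hcf : ∀ m : M, ⟪c, (m : V)⟫ = - f m := by
    intro m
    have h1 : ⟪((InnerProductSpace.toDual ℝ M).symm f : M), m⟫ = f m :=
      InnerProductSpace.toDual_symm_apply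
    rw [hc, inner_neg_left, ← Submodule.coe_inner, h1]
  have hcC : ∀ d ∈ D, (0:ℝ) ≤ ⟪c, d⟫ := by
    intro d hd
    have h2 := hfD ⟨d, hDM hd⟩ hd
    have h3 := hcf ⟨d, hDM hd⟩
    rw [h3]; linarith
  have hzero := H c hcC
  have hy0 : f y = 0 := by
    have hyD : (y : V) ∈ D := by
      have h8 : y ∈ D2 := interior_subset hy
      exact h8
    have h4 := hzero _ hyD
    have h5 := hcf y
    rw [h4] at h5; linarith
  have h6 := hf y hy
  rw [map_zero, hy0] at h6
  exact absurd h6 (lt_irrefl 0)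

set_option maxHeartbeats 1000000 in
theorem projection_onto_face_mem_of_convex_invariant
    {V : Type*} [NormedAddCommGroup V] [InnerProductSpace ℝ V] [FiniteDimensional ℝ V]
    {ι : Type*} (α : ι → V) (hα : ∀ i, α i ≠ 0)
    (W : Subgroup (V ≃ₗᵢ[ℝ] V))
    (hW : W = Subgroup.closure (Set.range fun i : ι => Submodule.reflection ((ℝ ∙ α i)ᗮ)))
    (S : Set V) (hconv : Convex ℝ S)
    (hinv : ∀ w ∈ W, ∀ v ∈ S, w v ∈ S)
    (x : V) (hx : x ∈ S)
    (horb : ∀ w ∈ W, w x ∈ S)  -- `S` contains the orbit `W x`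
    (I : Set ι) :
    ((Submodule.orthogonalProjectionOnto ((Submodule.span ℝ (α '' I))ᗮ) x : V) ∈ S) := by
  classical
  set U : Submodule ℝ V := Submodule.span ℝ (α '' I) with hU
  set p : V := (Submodule.orthogonalProjectionOnto Uᗮ x : V) with hp_def
  show p ∈ S
  have hpP : p ∈ Uᗮ := (Submodule.orthogonalProjectionOnto Uᗮ x).2
  have hxpU : x - p ∈ U := by
    have h1 := Submodule.sub_starProjection_mem_orthogonal (K := Uᗮ) x
    rw [Submodule.orthogonal_orthogonal] at h1; exact h1
  -- the subgroup generated by the reflections indexed by I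
  set G : Subgroup (V ≃ₗᵢ[ℝ] V) :=
    Subgroup.closure ((fun i : ι => Submodule.reflection ((ℝ ∙ α i)ᗮ)) '' I) with hG
  have hGW : ∀ g ∈ G, g ∈ W := by
    rw [hW]
    exact fun g hg => Subgroup.closure_mono (Set.image_subset_range _ _) hg
  -- every element of G fixes Uᗮ pointwise
  have hfix : ∀ g ∈ G, ∀ v ∈ Uᗮ, g v = v := by
    intro g hg
    induction hg using Subgroup.closure_induction with
    | mem g hgmem =>
      obtain ⟨i, hiI, rfl⟩ := hgmem
      intro v hv
      refine Submodule.reflection_mem_subspace_eq_self ?_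
      have hle : (ℝ ∙ α i) ≤ U := by
        rw [Submodule.span_singleton_le_iff_mem]
        exact Submodule.subset_span ⟨i, hiI, rfl⟩
      exact Submodule.orthogonal_le hle hv
    | one => intro v hv; rfl
    | mul a b _ _ ha hb =>
      intro v hv
      rw [LinearIsometryEquiv.coe_mul, Function.comp_apply, hb v hv, ha v hv]
    | inv a _ ha =>
      intro v hv
      have h1 := ha v hv
      calc a⁻¹ v = a⁻¹ (a v) := by rw [h1]
        _ = (a⁻¹ * a) v := by rw [LinearIsometryEquiv.coe_mul]; rfl
        _ = v := by rw [inv_mul_cancel]; rfl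
  -- G preserves U
  have hUinv : ∀ g ∈ G, ∀ u ∈ U, g u ∈ U := by
    intro g hg u hu
    have h1 : g u ∈ Uᗮᗮ := by
      rw [Submodule.mem_orthogonal']
      intro w hw
      have h2 := (g⁻¹ : V ≃ₗᵢ[ℝ] V).inner_map_map (g u) w
      have h3 : (g⁻¹ : V ≃ₗᵢ[ℝ] V) (g u) = u := by
        have h4 : (g⁻¹ * g) u = u := by rw [inv_mul_cancel]; rfl
        rwa [LinearIsometryEquiv.coe_mul, Function.comp_apply] at h4
      have h5 : (g⁻¹ : V ≃ₗᵢ[ℝ] V) w = w := hfix _ (inv_mem hg) w hw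
      rw [h3, h5] at h2
      rw [← h2]
      exact (Submodule.mem_orthogonal' Uᗮ u).mp (by rwa [Submodule.orthogonal_orthogonal]) w hw
    rwa [Submodule.orthogonal_orthogonal] at h1
  have hgp : ∀ g ∈ G, g p = p := fun g hg => hfix g hg p hpP
  -- orbit and its convex hull
  set O : Set V := (fun g : (V ≃ₗᵢ[ℝ] V) => g x) '' (G : Set (V ≃ₗᵢ[ℝ] V)) with hO
  set D : Set V := convexHull ℝ O with hD
  have hDconv : Convex ℝ D := convex_convexHull ℝ O
  have hxO : x ∈ O := ⟨1, Subgroup.one_mem G, rfl⟩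
  have hxD : x ∈ D := subset_convexHull ℝ O hxO
  have hDS : D ⊆ S := by
    refine convexHull_min ?_ hconv
    rintro - ⟨g, hg, rfl⟩
    exact horb g (hGW g hg)
  have hDinv : ∀ g ∈ G, ∀ d ∈ D, g d ∈ D := by
    intro g hg d hd
    have h1 : g '' D ⊆ D := by
      have h2 : (g.toLinearEquiv.toLinearMap) '' (convexHull ℝ O)
          = convexHull ℝ ((g.toLinearEquiv.toLinearMap) '' O) :=
        LinearMap.image_convexHull _ O
      have h3 : ⇑(g.toLinearEquiv.toLinearMap) = ⇑g := rfl
      rw [h3] at h2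
      rw [hD, h2]
      apply convexHull_mono
      rintro - ⟨-, ⟨h, hhG, rfl⟩, rfl⟩
      refine ⟨g * h, mul_mem hg hhG, ?_⟩
      show (g * h) x = g (h x)
      rw [LinearIsometryEquiv.coe_mul, Function.comp_apply]
    exact h1 ⟨d, hd, rfl⟩
  -- trivial case
  by_cases hxeqp : x - p = 0
  · rw [sub_eq_zero] at hxeqp
    exact hxeqp ▸ hx
  -- the averaging operator T
  obtain ⟨b, hb_sub, hb_span, hb_ind⟩ := exists_linearIndependent ℝ (α '' I)
  have hb_fin : b.Finite := hb_ind.set_finite_of_isNoetherian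
  set bs : Finset V := hb_fin.toFinset with hbs
  have hbs_mem : ∀ a ∈ bs, a ∈ b := fun a ha => hb_fin.mem_toFinset.mp ha
  set k : ℕ := bs.card with hk
  have hk1 : ((k:ℝ) + 1) ≠ 0 := Nat.cast_add_one_ne_zero k
  set T : V → V := fun v => ((k : ℝ) + 1)⁻¹ • (v + ∑ a ∈ bs, Submodule.reflection ((ℝ ∙ a)ᗮ) v) with hT
  clear_value bs k T
  have hrG : ∀ a ∈ bs, Submodule.reflection ((ℝ ∙ a)ᗮ) ∈ G := by
    intro a ha
    obtain ⟨i, hiI, rfl⟩ := hb_sub (hbs_mem a ha)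
    exact Subgroup.subset_closure ⟨i, hiI, rfl⟩
  have hbU : ∀ a ∈ bs, a ∈ U := by
    intro a ha
    rw [hU, ← hb_span]
    exact Submodule.subset_span (hbs_mem a ha)
  have hTp : T p = p := by
    have h1 : ∀ a ∈ bs, Submodule.reflection ((ℝ ∙ a)ᗮ) p = p := by
      intro a ha
      refine Submodule.reflection_mem_subspace_eq_self ?_
      have hle : (ℝ ∙ a) ≤ U := by
        rw [Submodule.span_singleton_le_iff_mem]; exact hbU a ha
      exact Submodule.orthogonal_le hle hpP
    rw [hT]
    simp only
    rw [Finset.sum_congr rfl h1, Finset.sum_const, ← hk]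
    have h2 : p + k • p = ((k:ℝ) + 1) • p := by
      rw [← Nat.cast_smul_eq_nsmul ℝ k p, add_smul, one_smul, add_comm]
    rw [h2, smul_smul, inv_mul_cancel₀ hk1, one_smul]
  have hTsub : ∀ v w, T v - T w = T (v - w) := by
    intro v w
    rw [hT]
    simp only
    rw [← smul_sub]
    congr 1
    rw [add_sub_add_comm, ← Finset.sum_sub_distrib]
    simp only [← map_sub]
  have hTsmul : ∀ (c : ℝ) v, T (c • v) = c • T v := by
    intro c v
    rw [hT]
    simp only [map_smul, ← Finset.smul_sum, ← smul_add, smul_comm c]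
  have hTU : ∀ u ∈ U, T u ∈ U := by
    intro u hu
    rw [hT]
    exact Submodule.smul_mem _ _ (Submodule.add_mem _ hu
      (Submodule.sum_mem _ fun a ha => hUinv _ (hrG a ha) u hu))
  have hTnorm_le : ∀ v, ‖T v‖ ≤ ‖v‖ := by
    intro v
    rw [hT]
    simp only
    rw [norm_smul]
    have h1 : ‖v + ∑ a ∈ bs, Submodule.reflection ((ℝ ∙ a)ᗮ) v‖ ≤ ((k:ℝ)+1) * ‖v‖ := by
      calc ‖v + ∑ a ∈ bs, Submodule.reflection ((ℝ ∙ a)ᗮ) v‖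
          ≤ ‖v‖ + ‖∑ a ∈ bs, Submodule.reflection ((ℝ ∙ a)ᗮ) v‖ := norm_add_le _ _
        _ ≤ ‖v‖ + ∑ a ∈ bs, ‖Submodule.reflection ((ℝ ∙ a)ᗮ) v‖ := by
            gcongr; exact norm_sum_le _ _
        _ = ‖v‖ + ∑ a ∈ bs, ‖v‖ := by
            congr 1; exact Finset.sum_congr rfl fun a _ => (Submodule.reflection _).norm_map v
        _ = ((k:ℝ)+1) * ‖v‖ := by
            rw [Finset.sum_const, ← hk, nsmul_eq_mul]; ring
    have h2 : ‖((k:ℝ)+1)⁻¹‖ = ((k:ℝ)+1)⁻¹ := by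
      rw [Real.norm_eq_abs, abs_of_pos (inv_pos.mpr (Nat.cast_add_one_pos k))]
    rw [h2]
    have h3 : (0:ℝ) ≤ ((k:ℝ)+1)⁻¹ := le_of_lt (inv_pos.mpr (Nat.cast_add_one_pos k))
    calc ((k:ℝ)+1)⁻¹ * ‖v + ∑ a ∈ bs, Submodule.reflection ((ℝ ∙ a)ᗮ) v‖
        ≤ ((k:ℝ)+1)⁻¹ * (((k:ℝ)+1) * ‖v‖) := mul_le_mul_of_nonneg_left h1 h3
      _ = ‖v‖ := by rw [← mul_assoc, inv_mul_cancel₀ hk1, one_mul]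
  have hTstrict : ∀ u ∈ U, u ≠ 0 → ‖T u‖ < ‖u‖ := by
    intro u hu hu0
    refine (hTnorm_le u).lt_of_ne ?_
    intro heq
    have hnu : ‖u‖ ≠ 0 := norm_ne_zero_iff.mpr hu0
    set z : V := T u with hz
    have hnz : ‖z‖ = ‖u‖ := heq
    have hnz0 : ‖z‖ ≠ 0 := by rw [hnz]; exact hnu
    have hnorm_ru : ∀ a ∈ bs, ‖Submodule.reflection ((ℝ ∙ a)ᗮ) u‖ = ‖u‖ :=
      fun a _ => (Submodule.reflection _).norm_map u
    have hkey : ((k:ℝ)+1) * (‖z‖*‖z‖)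
        = ⟪u, z⟫ + ∑ a ∈ bs, ⟪Submodule.reflection ((ℝ ∙ a)ᗮ) u, z⟫ := by
      have h2 : ((k:ℝ)+1) • z = u + ∑ a ∈ bs, Submodule.reflection ((ℝ ∙ a)ᗮ) u := by
        rw [hz, hT]
        simp only
        rw [smul_smul, mul_inv_cancel₀ hk1, one_smul]
      calc ((k:ℝ)+1) * (‖z‖*‖z‖) = ((k:ℝ)+1) * ⟪z, z⟫ := by
            rw [real_inner_self_eq_norm_mul_norm]
        _ = ⟪((k:ℝ)+1) • z, z⟫ := (real_inner_smul_left _ _ _).symm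
        _ = ⟪u + ∑ a ∈ bs, Submodule.reflection ((ℝ ∙ a)ᗮ) u, z⟫ := by rw [h2]
        _ = ⟪u, z⟫ + ∑ a ∈ bs, ⟪Submodule.reflection ((ℝ ∙ a)ᗮ) u, z⟫ := by
            rw [inner_add_left, sum_inner]
    have hboundu : ⟪u, z⟫ ≤ ‖z‖ * ‖z‖ := by
      calc ⟪u, z⟫ ≤ ‖u‖ * ‖z‖ := real_inner_le_norm u z
        _ = ‖z‖ * ‖z‖ := by rw [hnz]
    have hbounda : ∀ a ∈ bs, ⟪Submodule.reflection ((ℝ ∙ a)ᗮ) u, z⟫ ≤ ‖z‖ * ‖z‖ := by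
      intro a ha
      calc ⟪Submodule.reflection ((ℝ ∙ a)ᗮ) u, z⟫ ≤ ‖Submodule.reflection ((ℝ ∙ a)ᗮ) u‖ * ‖z‖ :=
            real_inner_le_norm _ z
        _ = ‖z‖ * ‖z‖ := by rw [hnorm_ru a ha, hnz]
    have hsum_le : ∑ a ∈ bs, ⟪Submodule.reflection ((ℝ ∙ a)ᗮ) u, z⟫ ≤ (k:ℝ) * (‖z‖*‖z‖) := by
      calc ∑ a ∈ bs, ⟪Submodule.reflection ((ℝ ∙ a)ᗮ) u, z⟫ ≤ ∑ _a ∈ bs, ‖z‖*‖z‖ :=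
            Finset.sum_le_sum hbounda
        _ = (k:ℝ) * (‖z‖*‖z‖) := by rw [Finset.sum_const, ← hk, nsmul_eq_mul]
    have hu_eq : ⟪u, z⟫ = ‖z‖ * ‖z‖ := by nlinarith [hkey, hboundu, hsum_le]
    have ha_eq : ∀ a ∈ bs, ⟪Submodule.reflection ((ℝ ∙ a)ᗮ) u, z⟫ = ‖z‖ * ‖z‖ := by
      intro a ha
      by_contra hne
      have hlt : ⟪Submodule.reflection ((ℝ ∙ a)ᗮ) u, z⟫ < ‖z‖*‖z‖ := (hbounda a ha).lt_of_ne hne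
      have hstrict : ∑ a ∈ bs, ⟪Submodule.reflection ((ℝ ∙ a)ᗮ) u, z⟫ < ∑ _a ∈ bs, ‖z‖*‖z‖ :=
        Finset.sum_lt_sum hbounda ⟨a, ha, hlt⟩
      rw [Finset.sum_const, ← hk, nsmul_eq_mul] at hstrict
      nlinarith [hkey, hu_eq]
    have hzu : z = u := by
      have h6 : ⟪u, z⟫ = ‖u‖ * ‖z‖ := by rw [hu_eq, hnz]
      have h7 := inner_eq_norm_mul_iff_real.mp h6
      -- h7 : ‖z‖ • u = ‖u‖ • z
      rw [hnz] at h7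
      exact (smul_right_injective V hnu h7).symm
    have hru : ∀ a ∈ bs, Submodule.reflection ((ℝ ∙ a)ᗮ) u = u := by
      intro a ha
      have h6 : ⟪Submodule.reflection ((ℝ ∙ a)ᗮ) u, z⟫ = ‖Submodule.reflection ((ℝ ∙ a)ᗮ) u‖ * ‖z‖ := by
        rw [ha_eq a ha, hnorm_ru a ha, hnz]
      have h7 := inner_eq_norm_mul_iff_real.mp h6
      -- h7 : ‖z‖ • refl u = ‖refl u‖ • z
      rw [hnz, hnorm_ru a ha] at h7
      have h8 := smul_right_injective V hnu h7
      rw [h8, hzu]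
    have humem : u ∈ Uᗮ := by
      have hUspan : U = Submodule.span ℝ b := by rw [hU, hb_span]
      rw [hUspan, Submodule.mem_orthogonal]
      intro w hw
      induction hw using Submodule.span_induction with
      | mem a haB =>
        have haU : u ∈ (ℝ ∙ a)ᗮ := (Submodule.reflection_eq_self_iff u).mp
          (hru a (by rw [hbs]; exact hb_fin.mem_toFinset.mpr haB))
        exact haU a (Submodule.mem_span_singleton_self a)
      | zero => rw [inner_zero_left]
      | add a1 a2 _ _ ih1 ih2 => rw [inner_add_left, ih1, ih2, add_zero]
      | smul r a1 _ ih => rw [real_inner_smul_left, ih, mul_zero]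
    have : u = 0 := by
      have hdisj := Submodule.orthogonal_disjoint U
      exact (Submodule.disjoint_def.mp hdisj) u hu humem
    exact hu0 this
  -- supremum of ‖T u‖ on the unit sphere of U
  set SU : Set V := (U : Set V) ∩ Metric.sphere 0 1 with hSU
  have hSUcomp : IsCompact SU := by
    refine Metric.isCompact_of_isClosed_isBounded
      (IsClosed.inter U.closed_of_finiteDimensional Metric.isClosed_sphere) ?_
    exact Metric.isBounded_sphere.subset inter_subset_right
  have hSUne : SU.Nonempty := by
    refine ⟨‖x - p‖⁻¹ • (x - p), Submodule.smul_mem _ _ hxpU, ?_⟩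
    have hnxp : ‖x - p‖ ≠ 0 := norm_ne_zero_iff.mpr hxeqp
    simp [norm_smul, abs_of_nonneg (inv_nonneg.mpr (norm_nonneg (x - p))),
      inv_mul_cancel₀ hnxp]
  have hTcont : Continuous T := by
    rw [hT]
    exact continuous_const.smul (continuous_id.add
      (continuous_finset_sum _ fun a _ => (Submodule.reflection ((ℝ ∙ a)ᗮ)).continuous))
  obtain ⟨u₀, hu₀, hmax⟩ := hSUcomp.exists_isMaxOn hSUne
    ((continuous_norm.comp hTcont).continuousOn)
  set μ : ℝ := ‖T u₀‖ with hμ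
  have hμ0 : 0 ≤ μ := norm_nonneg _
  have hμ1 : μ < 1 := by
    have h1 : ‖u₀‖ = 1 := by
      have := hu₀.2
      simpa using this
    have h2 := hTstrict u₀ hu₀.1 (by rw [← norm_ne_zero_iff, h1]; exact one_ne_zero)
    rwa [h1] at h2
  have hTbound : ∀ u ∈ U, ‖T u‖ ≤ μ * ‖u‖ := by
    intro u hu
    rcases eq_or_ne u 0 with rfl | hne
    · have hT0 : T 0 = 0 := by
        have := hTsmul 0 0
        rwa [zero_smul, zero_smul] at this
      simp [hT0]
    · have hnu : ‖u‖ ≠ 0 := norm_ne_zero_iff.mpr hne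
      have hmem : ‖u‖⁻¹ • u ∈ SU := by
        refine ⟨Submodule.smul_mem _ _ hu, ?_⟩
        simp [norm_smul, abs_of_nonneg (inv_nonneg.mpr (norm_nonneg u)),
          inv_mul_cancel₀ hnu]
      have h3 := hmax hmem
      simp only [Set.mem_setOf_eq, Function.comp_apply] at h3
      rw [hTsmul, norm_smul, Real.norm_eq_abs,
        abs_of_nonneg (inv_nonneg.mpr (norm_nonneg u))] at h3
      -- h3 : ‖u‖⁻¹ * ‖T u‖ ≤ μ
      calc ‖T u‖ = ‖u‖ * (‖u‖⁻¹ * ‖T u‖) := by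
            rw [← mul_assoc, mul_inv_cancel₀ hnu, one_mul]
        _ ≤ ‖u‖ * μ := mul_le_mul_of_nonneg_left h3 (norm_nonneg u)
        _ = μ * ‖u‖ := mul_comm _ _
  -- T maps D into D
  have hTD : ∀ d ∈ D, T d ∈ D := by
    intro d hd
    have hrep : T d = ∑ o : Option {a // a ∈ bs},
        ((k:ℝ)+1)⁻¹ • (Option.elim o d (fun a => Submodule.reflection ((ℝ ∙ (a:V))ᗮ) d)) := by
      rw [Fintype.sum_option]
      simp only [Option.elim]
      rw [hT]
      simp only
      rw [smul_add]
      congr 1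
      rw [← Finset.smul_sum]
      congr 1
      exact (Finset.sum_coe_sort bs (fun a => Submodule.reflection ((ℝ ∙ a)ᗮ) d)).symm
    rw [hrep]
    refine hDconv.sum_mem (fun o _ => le_of_lt (inv_pos.mpr (Nat.cast_add_one_pos k)))
      ?_ (fun o _ => ?_)
    · rw [Finset.sum_const, Finset.card_univ, Fintype.card_option, Fintype.card_coe, ← hk,
        nsmul_eq_mul]
      push_cast
      exact mul_inv_cancel₀ hk1
    · match o with
      | none => exact hd
      | some a => exact hDinv _ (hrG a a.2) d hd
  -- the iterates of T converge to p inside D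
  set seq : ℕ → V := fun n => T^[n] x with hseq
  have hseqP : ∀ n, seq n ∈ D ∧ seq n - p ∈ U ∧ ‖seq n - p‖ ≤ μ ^ n * ‖x - p‖ := by
    intro n
    induction n with
    | zero =>
      refine ⟨hxD, hxpU, ?_⟩
      rw [pow_zero, one_mul, show seq 0 = x from rfl]
    | succ n ih =>
      obtain ⟨h1, h2, h3⟩ := ih
      have hstep : seq (n+1) = T (seq n) := Function.iterate_succ_apply' T n x
      have hsub : T (seq n) - p = T (seq n - p) := by
        conv_lhs => rw [← hTp]
        rw [hTsub]
      refine ⟨?_, ?_, ?_⟩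
      · rw [hstep]; exact hTD _ h1
      · rw [hstep, hsub]; exact hTU _ h2
      · rw [hstep, hsub]
        calc ‖T (seq n - p)‖ ≤ μ * ‖seq n - p‖ := hTbound _ h2
          _ ≤ μ * (μ ^ n * ‖x - p‖) := mul_le_mul_of_nonneg_left h3 hμ0
          _ = μ ^ (n+1) * ‖x - p‖ := by ring
  have htend : Tendsto seq atTop (nhds p) := by
    rw [tendsto_iff_norm_sub_tendsto_zero]
    refine squeeze_zero (fun n => norm_nonneg _) (fun n => (hseqP n).2.2) ?_
    have h1 := (tendsto_pow_atTop_nhds_zero_of_lt_one hμ0 hμ1).mul_const ‖x - p‖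
    simpa using h1
  have hpK : p ∈ closure D :=
    mem_closure_of_tendsto htend (Eventually.of_forall fun n => (hseqP n).1)
  -- the supporting-functional face argument
  set C : Set V := {c | ∀ d ∈ D, ⟪c, p⟫ ≤ ⟪c, d⟫} with hC
  set Kc : Set V := closure D with hKc
  have hObdd : Bornology.IsBounded O := by
    refine (Metric.isBounded_closedBall (x := (0:V)) (r := ‖x‖)).subset ?_
    rintro - ⟨g, hg, rfl⟩
    rw [Metric.mem_closedBall, dist_zero_right]
    exact le_of_eq (g.norm_map x)
  have hDbdd : Bornology.IsBounded D := by
    rw [hD, isBounded_convexHull]; exact hObdd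
  have hKcomp : IsCompact Kc := Metric.isCompact_of_isClosed_isBounded isClosed_closure
    hDbdd.closure
  have hKconv : Convex ℝ Kc := hDconv.closure
  have hCK : ∀ c ∈ C, ∀ z ∈ Kc, ⟪c, p⟫ ≤ ⟪c, z⟫ := by
    intro c hc z hz
    have hcl : IsClosed {v : V | ⟪c, p⟫ ≤ ⟪c, v⟫} :=
      isClosed_le continuous_const (Continuous.inner continuous_const continuous_id)
    exact closure_minimal (fun d hd => hc d hd) hcl hz
  set F : Set V := Kc ∩ {z | ∀ c ∈ C, ⟪c, z⟫ = ⟪c, p⟫} with hF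
  have hpF : p ∈ F := ⟨hpK, fun c _ => rfl⟩
  have hFclosed : IsClosed F := by
    refine IsClosed.inter isClosed_closure ?_
    have heq : {z : V | ∀ c ∈ C, ⟪c, z⟫ = ⟪c, p⟫} = ⋂ c ∈ C, {z | ⟪c, z⟫ = ⟪c, p⟫} := by
      ext z; simp
    rw [heq]
    exact isClosed_biInter fun c _ =>
      isClosed_eq (Continuous.inner continuous_const continuous_id) continuous_const
  have hFconv : Convex ℝ F := by
    refine hKconv.inter ?_
    intro z1 h1 z2 h2 a bb ha hb hab
    intro c hc
    rw [inner_add_right, real_inner_smul_right, real_inner_smul_right, h1 c hc, h2 c hc]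
    rw [← add_mul, hab, one_mul]
  have hFcomp : IsCompact F := hKcomp.of_isClosed_subset hFclosed inter_subset_left
  have hCinv : ∀ g ∈ G, ∀ c ∈ C, (g⁻¹ : V ≃ₗᵢ[ℝ] V) c ∈ C := by
    intro g hg c hc d hd
    have h1 : ∀ v : V, ⟪(g⁻¹ : V ≃ₗᵢ[ℝ] V) c, v⟫ = ⟪c, g v⟫ := by
      intro v
      have h2 := g.inner_map_map ((g⁻¹ : V ≃ₗᵢ[ℝ] V) c) v
      have h3 : g ((g⁻¹ : V ≃ₗᵢ[ℝ] V) c) = c := by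
        have h4 : (g * g⁻¹) c = c := by rw [mul_inv_cancel]; rfl
        rwa [LinearIsometryEquiv.coe_mul, Function.comp_apply] at h4
      rw [h3] at h2
      exact h2.symm
    rw [h1 d, h1 p, hgp g hg]
    exact hc _ (hDinv g hg d hd)
  have hKinv : ∀ g ∈ G, ∀ z ∈ Kc, g z ∈ Kc := by
    intro g hg z hz
    have h1 : g '' closure D ⊆ closure (g '' D) := image_closure_subset_closure_image
      g.continuous
    have h2 : closure (g '' D) ⊆ closure D := closure_mono (by
      rintro - ⟨d, hd, rfl⟩; exact hDinv g hg d hd)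
    exact h2 (h1 ⟨z, hz, rfl⟩)
  have hFinv : ∀ g ∈ G, ∀ z ∈ F, g z ∈ F := by
    intro g hg z hz
    refine ⟨hKinv g hg z hz.1, ?_⟩
    intro c hc
    have h1 : ⟪c, g z⟫ = ⟪(g⁻¹ : V ≃ₗᵢ[ℝ] V) c, z⟫ := by
      have h2 := g.inner_map_map ((g⁻¹ : V ≃ₗᵢ[ℝ] V) c) z
      have h3 : g ((g⁻¹ : V ≃ₗᵢ[ℝ] V) c) = c := by
        have h4 : (g * g⁻¹) c = c := by rw [mul_inv_cancel]; rfl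
        rwa [LinearIsometryEquiv.coe_mul, Function.comp_apply] at h4
      rw [h3] at h2
      exact h2
    rw [h1, hz.2 _ (hCinv g hg c hc)]
    -- ⟪g⁻¹ c, p⟫ = ⟪c, p⟫
    have h5 : ∀ v : V, ⟪(g⁻¹ : V ≃ₗᵢ[ℝ] V) c, v⟫ = ⟪c, g v⟫ := by
      intro v
      have h2 := g.inner_map_map ((g⁻¹ : V ≃ₗᵢ[ℝ] V) c) v
      have h3 : g ((g⁻¹ : V ≃ₗᵢ[ℝ] V) c) = c := by
        have h4 : (g * g⁻¹) c = c := by rw [mul_inv_cancel]; rfl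
        rwa [LinearIsometryEquiv.coe_mul, Function.comp_apply] at h4
      rw [h3] at h2
      exact h2.symm
    rw [h5 p, hgp g hg]
  have hFext : IsExtreme ℝ Kc F := by
    constructor
    · exact inter_subset_left
    · rintro x1 hx1 x2 hx2 z ⟨hzK, hzeq⟩ hzopen
      obtain ⟨a, bb, ha, hb, hab, rfl⟩ := hzopen
      have key : ∀ c ∈ C, ⟪c, x1⟫ = ⟪c, p⟫ ∧ ⟪c, x2⟫ = ⟪c, p⟫ := by
        intro c hc
        have e1 := hCK c hc x1 hx1
        have e2 := hCK c hc x2 hx2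
        have e3 := hzeq c hc
        rw [inner_add_right, real_inner_smul_right, real_inner_smul_right] at e3
        have s1 : a * (⟪c, x1⟫ - ⟪c, p⟫) ≥ 0 := mul_nonneg ha.le (by linarith)
        have s2 : bb * (⟪c, x2⟫ - ⟪c, p⟫) ≥ 0 := mul_nonneg hb.le (by linarith)
        have hm : a * ⟪c, p⟫ + bb * ⟪c, p⟫ = ⟪c, p⟫ := by rw [← add_mul, hab, one_mul]
        have ssum : a * (⟪c, x1⟫ - ⟪c, p⟫) + bb * (⟪c, x2⟫ - ⟪c, p⟫) = 0 := by
          have : a * (⟪c, x1⟫ - ⟪c, p⟫) + bb * (⟪c, x2⟫ - ⟪c, p⟫)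
              = (a * ⟪c, x1⟫ + bb * ⟪c, x2⟫) - (a * ⟪c, p⟫ + bb * ⟪c, p⟫) := by ring
          rw [this, e3, hm, sub_self]
        have z1 : a * (⟪c, x1⟫ - ⟪c, p⟫) = 0 := by linarith
        have z2 : bb * (⟪c, x2⟫ - ⟪c, p⟫) = 0 := by linarith
        constructor
        · have := (mul_eq_zero.mp z1).resolve_left ha.ne'
          linarith
        · have := (mul_eq_zero.mp z2).resolve_left hb.ne'
          linarith
      exact ⟨hx1, fun c hc => (key c hc).1⟩
  obtain ⟨v, hvF⟩ := hFcomp.extremePoints_nonempty ⟨p, hpF⟩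
  have hvK : v ∈ Set.extremePoints ℝ Kc := hFext.extremePoints_subset_extremePoints hvF
  have hvO : v ∈ closure O := by
    have h1 := aux_closure_convexHull (V := V) hObdd
    rw [hKc, hD] at hvK
    rw [h1] at hvK
    exact extremePoints_convexHull_subset hvK
  have hxF : x ∈ F := by
    have hxcl : x ∈ closure F := by
      rw [Metric.mem_closure_iff]
      intro ε hε
      rw [Metric.mem_closure_iff] at hvO
      obtain ⟨o, ho, hdist⟩ := hvO ε hε
      obtain ⟨g, hg, rfl⟩ := ho
      refine ⟨(g⁻¹ : V ≃ₗᵢ[ℝ] V) v, hFinv _ (inv_mem hg) v hvF.1, ?_⟩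
      have h1 : dist x ((g⁻¹ : V ≃ₗᵢ[ℝ] V) v) = dist (g x) v := by
        have h2 : x = (g⁻¹ : V ≃ₗᵢ[ℝ] V) (g x) := by
          have h3 : (g⁻¹ * g) x = x := by rw [inv_mul_cancel]; rfl
          rw [LinearIsometryEquiv.coe_mul, Function.comp_apply] at h3
          exact h3.symm
        conv_lhs => rw [h2]
        exact (g⁻¹ : V ≃ₗᵢ[ℝ] V).dist_map (g x) v
      rw [h1, dist_comm]
      exact hdist
    rwa [hFclosed.closure_eq] at hxcl
  have hOF : O ⊆ F := by
    rintro - ⟨g, hg, rfl⟩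
    exact hFinv g hg x hxF
  have hDF : D ⊆ F := by
    rw [hD]
    exact convexHull_min hOF hFconv
  have hstar : ∀ c ∈ C, ∀ d ∈ D, ⟪c, d⟫ = ⟪c, p⟫ := fun c hc d hd => (hDF hd).2 c hc
  -- conclude via the translated set
  set D' : Set V := (fun d => d - p) '' D with hD'
  have hD'conv : Convex ℝ D' := by
    have h1 : D' = (fun d => -p + d) '' D := by
      rw [hD']
      exact Set.image_congr fun d _ => sub_eq_neg_add d p
    rw [h1]
    exact hDconv.translate (-p)
  have h0cl : (0:V) ∈ closure D' := by
    have h1 : Tendsto (fun n => seq n - p) atTop (nhds 0) := by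
      simpa using htend.sub_const p
    exact mem_closure_of_tendsto h1 (Eventually.of_forall fun n => ⟨seq n, (hseqP n).1, rfl⟩)
  have h0D' : (0:V) ∈ D' := by
    refine aux_mem_of_forall_support hD'conv h0cl ?_
    intro c hc d' hd'
    obtain ⟨d, hd, rfl⟩ := hd'
    have hcC : c ∈ C := by
      intro d2 hd2
      have h1 := hc _ ⟨d2, hd2, rfl⟩
      rw [inner_sub_right] at h1
      linarith
    rw [inner_sub_right, hstar c hcC d hd, sub_self]
  obtain ⟨d, hd, hdp⟩ := h0D'
  rw [sub_eq_zero] at hdp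
  exact hDS (hdp ▸ hd)
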